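/- Let F be a field of characteristic 2, let i ≥ 0, and let w_0, …, w_i ∈ F be such that w_0, …, w_{i−1} are linearly independent over the prime field F_2. Define polynomials f_j ∈ F[X] recursively by f_0 = X and f_{j+1} = f_j² + f_j(w_j) · f_j. Then f_i(w_i) = 0 if and only if w_i lies in the F_2-span of {w_0, …, w_{i−1}}; in particular the recursion detects linear dependence of a new root on the previous roots at no extra computational cost. -/
import Mathlib


/-- The recursively defined linearized polynomials: `f 0 = X` and
`f (j+1) = (f j)^2 + f j (w j) • f j`. -/
noncomputable def fseq {F : Type*} [CommRing F] (w : ℕ → F) : ℕ → Polynomial F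
  | 0 => Polynomial.X
  | j + 1 => fseq w j ^ 2 + Polynomial.C ((fseq w j).eval (w j)) * fseq w j

lemma fseq_add {F : Type*} [CommRing F] [CharP F 2] (w : ℕ → F) (j : ℕ) (a b : F) :
    (fseq w j).eval (a + b) = (fseq w j).eval a + (fseq w j).eval b := by
  induction j with
  | zero => simp [fseq]
  | succ j ih =>
    simp only [fseq, Polynomial.eval_add, Polynomial.eval_pow, Polynomial.eval_mul,
      Polynomial.eval_C, ih]
    have h2 : (2 : F) = 0 := by
      have := CharP.cast_eq_zero F 2; simpa using this
    ring_nf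
    rw [show ((fseq w j).eval a * (fseq w j).eval b * 2 : F) = 0 by rw [h2]; ring]
    ring

lemma fseq_zero_eval {F : Type*} [CommRing F] (w : ℕ → F) (j : ℕ) :
    (fseq w j).eval 0 = 0 := by
  induction j with
  | zero => simp [fseq]
  | succ j ih => simp [fseq, ih]

lemma fseq_root_w {F : Type*} [CommRing F] [CharP F 2] (w : ℕ → F) (k j : ℕ) (h : k < j) :
    (fseq w j).eval (w k) = 0 := by
  induction j with
  | zero => omega
  | succ j ih =>
    rcases Nat.lt_succ_iff_lt_or_eq.mp h with h' | h'
    · simp [fseq, ih h']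
    · subst h'; simp only [fseq, Polynomial.eval_add, Polynomial.eval_pow,
        Polynomial.eval_mul, Polynomial.eval_C]
      have := CharTwo.add_self_eq_zero ((fseq w k).eval (w k) ^ 2)
      rw [sq] at this ⊢
      linear_combination this

lemma fseq_root_sum {F : Type*} [CommRing F] [CharP F 2] (w : ℕ → F) (j : ℕ)
    (S : Finset (Fin j)) : (fseq w j).eval (∑ k ∈ S, w (k : ℕ)) = 0 := by
  classical
  induction S using Finset.induction with
  | empty => simpa using fseq_zero_eval w j
  | @insert a s hx ih =>
    rw [Finset.sum_insert hx, fseq_add, ih, fseq_root_w w a j a.isLt, add_zero]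

lemma fseq_root_mem {F : Type*} [Field F] [CharP F 2] (w : ℕ → F) :
    ∀ j a, (fseq w j).eval a = 0 → ∃ S : Finset (Fin j), a = ∑ k ∈ S, w (k : ℕ) := by
  intro j
  induction j with
  | zero =>
    intro a ha
    simp [fseq] at ha
    exact ⟨∅, by simp [ha]⟩
  | succ j ih =>
    intro a ha
    simp only [fseq, Polynomial.eval_add, Polynomial.eval_pow, Polynomial.eval_mul,
      Polynomial.eval_C] at ha
    have hfac : (fseq w j).eval a * ((fseq w j).eval a + (fseq w j).eval (w j)) = 0 := by
      linear_combination ha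
    rcases mul_eq_zero.mp hfac with h | h
    · obtain ⟨S, hS⟩ := ih a h
      refine ⟨S.map Fin.castSuccEmb, ?_⟩
      rw [Finset.sum_map]
      simpa using hS
    · have h' : (fseq w j).eval (a + w j) = 0 := by
        rw [fseq_add]
        linear_combination h
      obtain ⟨S, hS⟩ := ih _ h'
      have haw : a = w j + ∑ k ∈ S, w (k : ℕ) := by
        have : a + w j + w j = a := by
          rw [add_assoc, CharTwo.add_self_eq_zero, add_zero]
        rw [← this, hS]; ring
      refine ⟨insert (Fin.last j) (S.map Fin.castSuccEmb), ?_⟩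
      rw [Finset.sum_insert, Finset.sum_map]
      · simpa using haw
      · simp only [Finset.mem_map]
        rintro ⟨x, -, hx⟩
        exact absurd (congrArg Fin.val hx) (by simp [Fin.castSuccEmb]; omega)

theorem stmt12 {F : Type*} [Field F] [CharP F 2] (i : ℕ) (w : ℕ → F)
    (hw : ∀ S : Finset (Fin i), S.Nonempty → ∑ j ∈ S, w (j : ℕ) ≠ 0) :
    (fseq w i).eval (w i) = 0 ↔ ∃ S : Finset (Fin i), w i = ∑ j ∈ S, w (j : ℕ) := by
  constructor
  · exact fseq_root_mem w i (w i)
  · rintro ⟨S, hS⟩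
    rw [hS]
    exact fseq_root_sum w i S
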